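/- For every n ∈ ℕ and every y ∈ ℝ, |H_n(y) e^{−y²/2}| ≤ c_n, where c_n = 2^{n/2} Γ((n+1)/2) / (√π · n!). (This is the uniform bound on Hermite functions obtained from their integral representation, used in the Watanabe-regularity estimates for stochastic currents.) -/

import Mathlib

open MeasureTheory Real

/-- The normalized Hermite polynomial
`H_n(x) = ((−1)^n/n!) e^{x²/2} (d^n/dx^n) e^{−x²/2}`. -/
noncomputable def hermiteH (n : ℕ) (x : ℝ) : ℝ :=
  ((-1) ^ n / n.factorial) * Real.exp (x ^ 2 / 2) *
    iteratedDeriv n (fun y => Real.exp (-y ^ 2 / 2)) x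

/-- The constant `c_n = 2^{n/2} Γ((n+1)/2) / (√π · n!)`. -/
noncomputable def hermiteBound (n : ℕ) : ℝ :=
  2 ^ ((n : ℝ) / 2) * Real.Gamma (((n : ℝ) + 1) / 2) / (Real.sqrt Real.pi * n.factorial)

open Complex FourierTransform in
lemma hfb_intabs {b : ℝ} (hb : 0 < b) (k : ℕ) :
    Integrable (fun x : ℝ => |x| ^ k * rexp (-b * x ^ 2)) := by
  have h1 : IntegrableOn (fun x : ℝ => |x| ^ k * rexp (-b * x ^ 2)) (Set.Ioi 0) := by
    refine (integrableOn_rpow_mul_exp_neg_mul_sq hb (s := k)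
      (neg_one_lt_zero.trans_le k.cast_nonneg)).congr_fun ?_ measurableSet_Ioi
    intro x hx
    simp only [rpow_natCast, abs_of_pos (Set.mem_Ioi.mp hx)]
  have h2 : IntegrableOn (fun x : ℝ => |x| ^ k * rexp (-b * x ^ 2)) (Set.Iic 0) := by
    rw [← Measure.map_neg_eq_self (volume : Measure ℝ)]
    have m : MeasurableEmbedding fun x : ℝ => -x := (Homeomorph.neg ℝ).measurableEmbedding
    rw [m.integrableOn_map_iff]
    have hpre : (fun x : ℝ => -x) ⁻¹' Set.Iic 0 = Set.Ici 0 := by ext z; simp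
    simp_rw [Function.comp_def, abs_neg, neg_sq, hpre]
    exact (integrableOn_Ici_iff_integrableOn_Ioi).mpr h1
  rw [← integrableOn_univ, ← Set.Iic_union_Ioi (a := (0:ℝ))]
  exact h2.union h1

lemma hfb_gaussmoment {b : ℝ} (hb : 0 < b) (n : ℕ) :
    ∫ x in Set.Ioi (0:ℝ), x ^ n * rexp (-b * x ^ 2)
      = b ^ (-((n:ℝ) + 1) / 2) * (1 / 2) * Real.Gamma (((n:ℝ) + 1) / 2) := by
  rw [← _root_.integral_rpow_mul_exp_neg_mul_rpow two_pos
    (neg_one_lt_zero.trans_le n.cast_nonneg) hb]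
  refine setIntegral_congr_fun measurableSet_Ioi fun x hx => ?_
  simp only [rpow_natCast, rpow_two]

lemma hfb_iteratedDeriv_ofReal (g : ℝ → ℝ) (n : ℕ) (hg : ContDiff ℝ n g) (x : ℝ) :
    iteratedDeriv n (fun t : ℝ => (g t : ℂ)) x = ((iteratedDeriv n g x : ℝ) : ℂ) := by
  have h : (fun t : ℝ => (g t : ℂ)) = ⇑Complex.ofRealCLM ∘ g := rfl
  rw [h, iteratedDeriv_eq_iteratedFDeriv, iteratedDeriv_eq_iteratedFDeriv,
    ContinuousLinearMap.iteratedFDeriv_comp_left _ hg.contDiffAt le_rfl]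
  rfl

lemma hfb_arith (n : ℕ) :
    (2*π) ^ ((1:ℝ)/2) * ((2*π) ^ n * (2*π^2) ^ (-((n:ℝ)+1)/2))
      = 2 ^ ((n:ℝ)/2) / Real.sqrt π := by
  have hπ := Real.pi_pos
  have h2 : (0:ℝ) ≤ 2 := by norm_num
  rw [Real.sqrt_eq_rpow, ← Real.rpow_natCast (2*π) n,
    Real.mul_rpow h2 hπ.le, Real.mul_rpow h2 hπ.le,
    Real.mul_rpow h2 (by positivity), ← Real.rpow_natCast π 2,
    ← Real.rpow_mul hπ.le]
  push_cast
  rw [show (2:ℝ)^((1:ℝ)/2) * Real.pi^((1:ℝ)/2) * ((2:ℝ)^((n:ℝ)) * π^((n:ℝ)) *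
      ((2:ℝ)^(-((n:ℝ)+1)/2) * π^((2:ℝ)*(-((n:ℝ)+1)/2))))
    = ((2:ℝ)^((1:ℝ)/2) * (2:ℝ)^((n:ℝ)) * (2:ℝ)^(-((n:ℝ)+1)/2)) *
      (π^((1:ℝ)/2) * π^((n:ℝ)) * π^((2:ℝ)*(-((n:ℝ)+1)/2))) from by ring]
  rw [← Real.rpow_add two_pos, ← Real.rpow_add two_pos,
    ← Real.rpow_add hπ, ← Real.rpow_add hπ]
  rw [show (1:ℝ)/2 + (n:ℝ) + -((n:ℝ)+1)/2 = (n:ℝ)/2 from by ring,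
    show (1:ℝ)/2 + (n:ℝ) + (2:ℝ)*(-((n:ℝ)+1)/2) = -((1:ℝ)/2) from by ring,
    Real.rpow_neg hπ.le, div_eq_mul_inv]
  ring

open Complex FourierTransform in
/-- uniform bound on Hermite functions: `|H_n(y) e^{−y²/2}| ≤ c_n`. -/
theorem hermite_function_uniform_bound (n : ℕ) (y : ℝ) :
    |hermiteH n y * Real.exp (-y ^ 2 / 2)| ≤ hermiteBound n := by
  have hπ := Real.pi_pos
  set g : ℝ → ℝ := fun x => Real.exp (-x ^ 2 / 2) with hgdef
  have hg : ContDiff ℝ n g := by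
    rw [hgdef]
    exact (Real.contDiff_exp.comp (((contDiff_id.pow 2).neg).div_const 2)).of_le le_top
  have hexp : Real.exp (y ^ 2 / 2) * Real.exp (-y ^ 2 / 2) = 1 := by
    rw [← Real.exp_add]; ring_nf; exact Real.exp_zero
  have h1 : hermiteH n y * Real.exp (-y ^ 2 / 2)
      = ((-1) ^ n / n.factorial) * iteratedDeriv n g y := by
    unfold hermiteH
    calc ((-1) ^ n / (n.factorial:ℝ)) * Real.exp (y ^ 2 / 2) *
          iteratedDeriv n (fun y => Real.exp (-y ^ 2 / 2)) y * Real.exp (-y ^ 2 / 2)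
        = ((-1) ^ n / (n.factorial:ℝ)) * iteratedDeriv n g y *
            (Real.exp (y ^ 2 / 2) * Real.exp (-y ^ 2 / 2)) := by rw [hgdef]; ring
      _ = ((-1) ^ n / (n.factorial:ℝ)) * iteratedDeriv n g y := by rw [hexp, mul_one]
  -- the complex Gaussian and its Fourier transform設定
  set f : ℝ → ℂ := fun x : ℝ => Complex.exp (-(π:ℂ) * (2 * (π:ℂ)) * (x:ℂ) ^ 2) with hfdef
  have hbre : (0:ℝ) < (2 * (π:ℂ)).re := by
    simp only [Complex.mul_re, Complex.ofReal_re, Complex.ofReal_im]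
    norm_num [hπ]
  have hnormf : ∀ x : ℝ, ‖f x‖ = rexp (-(2*π^2) * x ^ 2) := by
    intro x
    rw [hfdef]
    have hz : (-(π:ℂ) * (2 * (π:ℂ)) * (x:ℂ) ^ 2) = ((-(2*π^2) * x ^ 2 : ℝ) : ℂ) := by
      push_cast; ring
    simp only [hz, Complex.norm_exp, Complex.ofReal_re]
  have hint : ∀ k : ℕ, (k:ℕ∞) ≤ (n:ℕ∞) → Integrable (fun x : ℝ => x ^ k • f x) := by
    intro k _
    refine (hfb_intabs (b := 2*π^2) (by positivity) k).mono' ?_ ?_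
    · apply Continuous.aestronglyMeasurable
      rw [hfdef]; fun_prop
    · filter_upwards with x
      rw [norm_smul, hnormf, Real.norm_eq_abs, _root_.abs_pow]
  have key := Real.iteratedDeriv_fourier (f := f) (N := n) hint le_rfl
  set c : ℂ := (2 * (π:ℂ)) ^ ((1:ℂ)/2) with hcdef
  have hc : c ≠ 0 := by
    rw [hcdef, Ne, Complex.cpow_eq_zero_iff]
    push_neg
    intro h
    exfalso
    have : (2 * (π:ℂ)).re = 0 := by rw [h]; simp
    rw [this] at hbre; exact lt_irrefl 0 hbre
  have hG : ∀ t : ℝ, ((g t : ℝ) : ℂ) = Complex.exp (-(t:ℂ) ^ 2 / 2) := by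
    intro t
    rw [hgdef, Complex.ofReal_exp]
    push_cast
    ring_nf
  have hFf : 𝓕 f = fun t : ℝ => c⁻¹ • ((g t : ℝ) : ℂ) := by
    rw [hfdef, fourier_gaussian_pi hbre]
    funext t
    rw [hG, smul_eq_mul, ← hcdef]
    have hq : -(π:ℂ) / (2 * (π:ℂ)) * (t:ℂ) ^ 2 = -(t:ℂ) ^ 2 / 2 := by
      have : (π:ℂ) ≠ 0 := Complex.ofReal_ne_zero.mpr Real.pi_ne_zero
      field_simp
    rw [hq, one_div]
  have hsm : ContDiff ℝ n (fun t : ℝ => ((g t : ℝ) : ℂ)) :=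
    Complex.ofRealCLM.contDiff.comp hg
  have h2 : iteratedDeriv n (𝓕 f) y
      = c⁻¹ * iteratedDeriv n (fun t : ℝ => ((g t : ℝ) : ℂ)) y := by
    rw [hFf]
    have h3 := iteratedDerivWithin_const_smul (f := fun t : ℝ => ((g t : ℝ) : ℂ))
      (Set.mem_univ y) uniqueDiffOn_univ c⁻¹ hsm.contDiffAt.contDiffWithinAt
    simp only [iteratedDerivWithin_univ] at h3
    have : (fun t : ℝ => c⁻¹ • ((g t : ℝ) : ℂ)) = c⁻¹ • (fun t : ℝ => ((g t : ℝ) : ℂ)) := rfl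
    rw [this, h3, smul_eq_mul]
  have h3 : ((iteratedDeriv n g y : ℝ) : ℂ) = c * iteratedDeriv n (𝓕 f) y := by
    rw [h2, ← hfb_iteratedDeriv_ofReal g n hg y, ← mul_assoc, mul_inv_cancel₀ hc, one_mul]
  have hnormc : ‖c‖ = (2*π) ^ ((1:ℝ)/2) := by
    rw [hcdef]
    have h2π : (2 * (π:ℂ)) = ((2*π : ℝ) : ℂ) := by push_cast; ring
    rw [h2π, Complex.norm_cpow_eq_rpow_re_of_pos (by positivity)]
    norm_num
  have hbound : ‖iteratedDeriv n (𝓕 f) y‖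
      ≤ ∫ x : ℝ, ‖(-2 * (π:ℂ) * Complex.I * (x:ℂ)) ^ n • f x‖ := by
    rw [key]
    exact VectorFourier.norm_fourierIntegral_le_integral_norm _ _ _ _ _
  have hval : ∫ x : ℝ, ‖(-2 * (π:ℂ) * Complex.I * (x:ℂ)) ^ n • f x‖
      = (2*π) ^ n * (2 * ((2*π^2) ^ (-((n:ℝ)+1)/2) * (1/2) * Real.Gamma (((n:ℝ)+1)/2))) := by
    have hptw : ∀ x : ℝ, ‖(-2 * (π:ℂ) * Complex.I * (x:ℂ)) ^ n • f x‖
        = (2*π) ^ n * ((fun u : ℝ => u ^ n * rexp (-(2*π^2) * u ^ 2)) |x|) := by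
      intro x
      rw [norm_smul, norm_pow, hnormf]
      have habs : ‖-2 * (π:ℂ) * Complex.I * (x:ℂ)‖ = 2 * π * |x| := by
        simp only [norm_mul, Complex.norm_I, Complex.norm_real, Real.norm_eq_abs]
        rw [show ‖(-2 : ℂ)‖ = 2 by norm_num, abs_of_pos hπ]
        ring
      rw [habs]
      simp only []
      rw [mul_pow, mul_pow, _root_.sq_abs]
      ring
    simp_rw [hptw]
    rw [integral_const_mul,
      integral_comp_abs (f := fun u : ℝ => u ^ n * rexp (-(2*π^2) * u ^ 2)),
      hfb_gaussmoment (by positivity) n]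
  -- put everything together
  rw [h1, abs_mul, abs_div, _root_.abs_pow, abs_neg, abs_one, one_pow,
    Nat.abs_cast]
  have hD : |iteratedDeriv n g y|
      ≤ (2*π) ^ ((1:ℝ)/2) * ((2*π) ^ n *
        (2 * ((2*π^2) ^ (-((n:ℝ)+1)/2) * (1/2) * Real.Gamma (((n:ℝ)+1)/2)))) := by
    have : |iteratedDeriv n g y| = ‖((iteratedDeriv n g y : ℝ) : ℂ)‖ := by
      rw [Complex.norm_real, Real.norm_eq_abs]
    rw [this, h3, norm_mul, hnormc]
    calc (2*π) ^ ((1:ℝ)/2) * ‖iteratedDeriv n (𝓕 f) y‖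
        ≤ (2*π) ^ ((1:ℝ)/2) * ∫ x : ℝ, ‖(-2 * (π:ℂ) * Complex.I * (x:ℂ)) ^ n • f x‖ := by
          gcongr
      _ = _ := by rw [hval]
  have hGamma : 0 ≤ Real.Gamma (((n:ℝ)+1)/2) := le_of_lt (Real.Gamma_pos_of_pos (by positivity))
  have hfac : (0:ℝ) < n.factorial := by exact_mod_cast n.factorial_pos
  rw [div_mul_eq_mul_div, one_mul, hermiteBound, div_le_div_iff₀ hfac (by positivity)]
  calc |iteratedDeriv n g y| * (Real.sqrt π * n.factorial)
      ≤ ((2*π) ^ ((1:ℝ)/2) * ((2*π) ^ n *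
        (2 * ((2*π^2) ^ (-((n:ℝ)+1)/2) * (1/2) * Real.Gamma (((n:ℝ)+1)/2))))) *
          (Real.sqrt π * n.factorial) := by
        gcongr
    _ = ((2*π) ^ ((1:ℝ)/2) * ((2*π) ^ n * (2*π^2) ^ (-((n:ℝ)+1)/2))) *
          Real.Gamma (((n:ℝ)+1)/2) * (Real.sqrt π * n.factorial) := by ring
    _ = 2 ^ ((n:ℝ)/2) * Real.Gamma (((n:ℝ)+1)/2) * n.factorial := by
        rw [hfb_arith n]
        have hs : Real.sqrt π ≠ 0 := by positivity
        field_simp
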